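/- Suppose in a differential ring containing Δ_T, Δ_W, E_T (with E_T invertible) the derivation ∂⁺ satisfies ∂⁺(E_T^{q−1}) = 0 and ∂⁺(Δ_W − T^{(q−1)/2}Δ_T) = −(1/2)(Δ_W + T^{(q−1)/2}Δ_T)E_T, and ∂⁺ satisfies the Leibniz rule. Then for j_T^+ := (Δ_W − T^{(q−1)/2}Δ_T)²/E_T^{q−1}, one has Θ(j_T^+) = −(Δ_W² − T^{q−1}Δ_T²)/E_T^{q−2}, where Θ(j_T^+) is the action of ∂⁺ on the weight-0 element j_T^+. -/

import Mathlib

/-- Suppose in a differential field containing `Δ_T, Δ_W, E_T` (with `E_T`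
invertible and `2` invertible) the derivation `∂⁺` satisfies `∂⁺(E_T^{q−1}) = 0` and
`∂⁺(Δ_W − T^{(q−1)/2}Δ_T) = −(1/2)(Δ_W + T^{(q−1)/2}Δ_T)E_T`.  Then for
`j_T^+ := (Δ_W − T^{(q−1)/2}Δ_T)²/E_T^{q−1}` one has
`Θ(j_T^+) = −(Δ_W² − T^{q−1}Δ_T²)/E_T^{q−2}`, where `Θ(j_T^+)` is `∂⁺` applied to the
weight-0 element `j_T^+`. -/
theorem stmt_17 (p r q : ℕ) (hp : p.Prime) (hpodd : Odd p) (hr : 0 < r) (hq : q = p ^ r)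
    (R : Type*) [Field R]
    (D : Derivation ℤ R R)
    (T ΔT ΔW ET : R)
    (hET : ET ≠ 0) (h2 : (2 : R) ≠ 0)
    (hD1 : D (ET ^ (q - 1)) = 0)
    (hD2 : D (ΔW - T ^ ((q - 1) / 2) * ΔT)
      = -((2 : R)⁻¹ * ((ΔW + T ^ ((q - 1) / 2) * ΔT) * ET))) :
    D ((ΔW - T ^ ((q - 1) / 2) * ΔT) ^ 2 / ET ^ (q - 1))
      = -((ΔW ^ 2 - T ^ (q - 1) * ΔT ^ 2) / ET ^ (q - 2)) := by
  have hqodd : Odd q := hq ▸ hpodd.pow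
  have hq3 : 3 ≤ q := by
    rcases hqodd with ⟨k, hk⟩
    have hq2 : 2 ≤ q := by
      have : 2 ≤ p := hp.two_le
      calc 2 ≤ p := this
        _ = p ^ 1 := (pow_one p).symm
        _ ≤ p ^ r := Nat.pow_le_pow_right (by omega) hr
        _ = q := hq.symm
    omega
  have hm : (q - 1) / 2 + (q - 1) / 2 = q - 1 := by
    rcases hqodd with ⟨k, hk⟩; omega
  have hq12 : q - 1 = (q - 2) + 1 := by omega
  set A := ΔW - T ^ ((q - 1) / 2) * ΔT with hA
  rw [Derivation.leibniz_div_const _ _ _ hD1, Derivation.leibniz_pow, hD2]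
  have hT : T ^ (q - 1) = T ^ ((q - 1) / 2) * T ^ ((q - 1) / 2) := by rw [← pow_add, hm]
  have hAB : A * (ΔW + T ^ ((q - 1) / 2) * ΔT) = ΔW ^ 2 - T ^ (q - 1) * ΔT ^ 2 := by
    rw [hT]; ring
  have hE : ET ^ (q - 1) = ET ^ (q - 2) * ET := by rw [hq12, pow_succ]
  simp only [nsmul_eq_mul, smul_eq_mul, Nat.cast_ofNat]
  field_simp [hE]
  rw [hT, hA, hE]
  ring
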